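/- Let M ⊆ ℂⁿ be a convex open set, and let A : (i,j,k) ↦ A_{ijk} ∈ 𝒪(M) be a family of holomorphic functions symmetric in (i,j,k) such that ∂_i A_{jkl} is symmetric in all four indices i,j,k,l. Then there exists a holomorphic function F on M with ∂_i ∂_j ∂_k F = A_{ijk} for all i,j,k. -/

import Mathlib

set_option maxHeartbeats 1000000

open Metric Set MeasureTheory ContinuousLinearMap

/-- The partial derivative `∂_i f` of `f : ℂⁿ → ℂ`. -/
noncomputable def pd {n : ℕ} (i : Fin n) (f : (Fin n → ℂ) → ℂ) : (Fin n → ℂ) → ℂ :=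
  fun z => fderiv ℂ f z (Pi.single i 1)


lemma real_smul_eq {n : ℕ} (t : ℝ) (w : Fin n → ℂ) : t • w = (t : ℂ) • w :=
  (algebraMap_smul ℂ t w).symm


lemma exists_bound_fderiv {n : ℕ} {F : Type*} [NormedAddCommGroup F] [NormedSpace ℂ F]
    [CompleteSpace F] {M : Set (Fin n → ℂ)} (hM : IsOpen M)
    {g : (Fin n → ℂ) → F} (hg : DifferentiableOn ℂ g M)
    {K : Set (Fin n → ℂ)} (hK : IsCompact K) (hKM : K ⊆ M) :
    ∃ C : ℝ, 0 ≤ C ∧ ∀ x ∈ K, ‖fderiv ℂ g x‖ ≤ C := by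
  obtain ⟨r, hr0, hrM⟩ := hK.exists_thickening_subset_open hM hKM
  set δ := r / 2 with hδ
  have hδ0 : 0 < δ := by positivity
  have hsub : cthickening δ K ⊆ M :=
    (cthickening_subset_thickening' hr0 (by simp [hδ]; linarith) K).trans hrM
  have hK' : IsCompact (cthickening δ K) := hK.cthickening
  obtain ⟨C, hC⟩ := hK'.exists_bound_of_continuousOn (hg.continuousOn.mono hsub)
  have hC0 : 0 ≤ max C 0 := le_max_right _ _
  refine ⟨(max C 0) / δ, by positivity, fun x hx => ?_⟩
  have hxM : x ∈ M := hKM hx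
  refine ContinuousLinearMap.opNorm_le_bound _ (by positivity) fun v => ?_
  rcases eq_or_ne v 0 with rfl | hv
  · simp
  · set u : Fin n → ℂ := ‖v‖⁻¹ • v with hu
    have hun : ‖u‖ = 1 := by
      rw [hu, norm_smul, norm_inv, norm_norm, inv_mul_cancel₀ (norm_ne_zero_iff.2 hv)]
    set φ : ℂ → F := fun w => g (x + w • u) with hφ
    have hmem : ∀ w : ℂ, w ∈ closedBall (0 : ℂ) δ → x + w • u ∈ cthickening δ K := by
      intro w hw
      apply mem_cthickening_of_dist_le _ x δ K hx
      simp only [dist_eq_norm, add_sub_cancel_left, norm_smul, hun, mul_one]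
      simpa [dist_eq_norm] using hw
    have hφd : ∀ w ∈ closedBall (0 : ℂ) δ, DifferentiableAt ℂ φ w := by
      intro w hw
      have : DifferentiableAt ℂ g (x + w • u) :=
        hg.differentiableAt (hM.mem_nhds (hsub (hmem w hw)))
      exact this.comp w (by fun_prop)
    have hder : HasDerivAt φ (fderiv ℂ g x u) 0 := by
      have hg' : HasFDerivAt g (fderiv ℂ g x) ((fun w : ℂ => x + w • u) 0) := by
        simpa using (hg.differentiableAt (hM.mem_nhds hxM)).hasFDerivAt
      have hinner : HasDerivAt (fun w : ℂ => x + w • u) ((1:ℂ) • u) 0 :=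
        ((hasDerivAt_id (0 : ℂ)).smul_const u).const_add x
      exact (by simpa using hg'.comp_hasDerivAt 0 hinner :
        HasDerivAt (g ∘ fun w : ℂ => x + w • u) (fderiv ℂ g x u) 0)
    have hest : ‖deriv φ 0‖ ≤ max C 0 / δ := by
      apply Complex.norm_deriv_le_of_forall_mem_sphere_norm_le hδ0
      · apply DifferentiableOn.diffContOnCl
        rw [closure_ball _ hδ0.ne']
        exact fun w hw => (hφd w hw).differentiableWithinAt
      · intro w hw
        exact le_trans (hC _ (hmem w (sphere_subset_closedBall hw))) (le_max_left C 0)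
    rw [hder.deriv] at hest
    calc ‖fderiv ℂ g x v‖ = ‖v‖ * ‖fderiv ℂ g x u‖ := by
          rw [hu, (fderiv ℂ g x).map_smul_of_tower, norm_smul, norm_inv, norm_norm]
          rw [← mul_assoc, mul_inv_cancel₀ (norm_ne_zero_iff.2 hv), one_mul]
      _ ≤ ‖v‖ * (max C 0 / δ) := by
          exact mul_le_mul_of_nonneg_left hest (norm_nonneg v)
      _ = max C 0 / δ * ‖v‖ := mul_comm _ _

lemma exists_primitive {n : ℕ} {M : Set (Fin n → ℂ)} (hM : IsOpen M) (hconv : Convex ℝ M)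
    {c : Fin n → ℂ} (hc : c ∈ M) {g : (Fin n → ℂ) → ((Fin n → ℂ) →L[ℂ] ℂ)}
    (hg : DifferentiableOn ℂ g M)
    (hsym : ∀ x ∈ M, ∀ v w, fderiv ℂ g x v w = fderiv ℂ g x w v) :
    ∃ f : (Fin n → ℂ) → ℂ, ∀ z ∈ M, HasFDerivAt f (g z) z := by
  refine ⟨fun z => ∫ t in (0:ℝ)..1, g (c + t • (z - c)) (z - c), fun z₀ hz₀ => ?_⟩
  -- a compact tube around the segment from `c` to `z₀`
  have hseg : (fun t : ℝ => c + t • (z₀ - c)) '' Icc 0 1 ⊆ M := by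
    rintro x ⟨t, ht, rfl⟩
    have h := hconv hc hz₀ (by linarith [ht.2] : (0:ℝ) ≤ 1 - t) ht.1 (by ring)
    have e : c + t • (z₀ - c) = (1 - t) • c + t • z₀ := by module
    show c + t • (z₀ - c) ∈ M
    rw [e]; exact h
  have hsegc : IsCompact ((fun t : ℝ => c + t • (z₀ - c)) '' Icc 0 1) :=
    isCompact_Icc.image (by fun_prop)
  obtain ⟨r, hr0, hrM⟩ := hsegc.exists_thickening_subset_open hM hseg
  set ε := r / 2 with hε
  have hε0 : 0 < ε := by positivity
  set K := (fun p : ℝ × (Fin n → ℂ) => c + p.1 • (p.2 - c)) '' (Icc 0 1 ×ˢ closedBall z₀ ε)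
    with hKdef
  have hKc : IsCompact K :=
    (isCompact_Icc.prod (isCompact_closedBall _ _)).image (by fun_prop)
  have hmemK : ∀ t ∈ Icc (0:ℝ) 1, ∀ z ∈ closedBall z₀ ε, c + t • (z - c) ∈ K :=
    fun t ht z hz => ⟨(t, z), ⟨ht, hz⟩, rfl⟩
  have hKM : K ⊆ M := by
    rintro x ⟨⟨t, z⟩, ⟨ht, hz⟩, rfl⟩
    apply hrM
    rw [mem_thickening_iff]
    refine ⟨c + t • (z₀ - c), ⟨t, ht, rfl⟩, ?_⟩
    have : dist (c + t • (z - c)) (c + t • (z₀ - c)) = |t| * ‖z - z₀‖ := by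
      rw [dist_eq_norm]
      rw [show c + t • (z - c) - (c + t • (z₀ - c)) = t • (z - z₀) by module]
      rw [norm_smul, Real.norm_eq_abs]
    rw [this]
    have h1 : |t| ≤ 1 := abs_le.2 ⟨by linarith [ht.1], ht.2⟩
    have h2 : ‖z - z₀‖ ≤ ε := by rwa [← dist_eq_norm, ← mem_closedBall]
    calc |t| * ‖z - z₀‖ ≤ 1 * ε := by
          exact mul_le_mul h1 h2 (norm_nonneg _) zero_le_one
      _ < r := by rw [one_mul, hε]; linarith
  obtain ⟨C₁, hC₁0, hC₁⟩ := exists_bound_fderiv hM hg hKc hKM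
  obtain ⟨C₂, hC₂⟩ := hKc.exists_bound_of_continuousOn (hg.continuousOn.mono hKM)
  have hIoc : Set.uIoc (0:ℝ) 1 ⊆ Icc (0:ℝ) 1 := by
    rw [Set.uIoc_of_le zero_le_one]; exact Ioc_subset_Icc_self
  -- the derivative of the integrand in `z`
  set F' : (Fin n → ℂ) → ℝ → ((Fin n → ℂ) →L[ℂ] ℂ) := fun z t =>
    g (c + t • (z - c)) + (t : ℂ) • ((fderiv ℂ g (c + t • (z - c))).flip (z - c)) with hF'
  have hdiff : ∀ t ∈ Icc (0:ℝ) 1, ∀ z ∈ closedBall z₀ ε,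
      HasFDerivAt (fun z => g (c + t • (z - c)) (z - c)) (F' z t) z := by
    intro t ht z hz
    have hγM : c + t • (z - c) ∈ M := hKM (hmemK t ht z hz)
    have h1 : HasFDerivAt (fun z : Fin n → ℂ => c + t • (z - c))
        ((t : ℂ) • ContinuousLinearMap.id ℂ (Fin n → ℂ)) z := by
      have h0 : HasFDerivAt (fun z : Fin n → ℂ => c + (t : ℂ) • (z - c))
          ((t : ℂ) • ContinuousLinearMap.id ℂ (Fin n → ℂ)) z :=
        (((hasFDerivAt_id z).sub_const c).const_smul (t : ℂ)).const_add c
      simpa only [← real_smul_eq] using h0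
    have h2 : HasFDerivAt g (fderiv ℂ g (c + t • (z - c))) (c + t • (z - c)) :=
      (hg.differentiableAt (hM.mem_nhds hγM)).hasFDerivAt
    have h3 := h2.comp z h1
    have h4 : HasFDerivAt (fun z : Fin n → ℂ => z - c)
        (ContinuousLinearMap.id ℂ (Fin n → ℂ)) z := (hasFDerivAt_id z).sub_const c
    have h5 := h3.clm_apply h4
    simp only [Function.comp_def] at h5
    have e : (g (c + t • (z - c))).comp (ContinuousLinearMap.id ℂ (Fin n → ℂ)) +
        ((fderiv ℂ g (c + t • (z - c))).comp
          ((t : ℂ) • ContinuousLinearMap.id ℂ (Fin n → ℂ))).flip (z - c) = F' z t := by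
      ext v
      simp [F', ContinuousLinearMap.smul_apply, mul_comm]
    rw [e] at h5
    exact h5
  -- bound for `F'` on the tube
  set bnd : ℝ := C₂ + C₁ * (‖z₀ - c‖ + ε) with hbnd
  have hboundF' : ∀ t ∈ Icc (0:ℝ) 1, ∀ z ∈ closedBall z₀ ε, ‖F' z t‖ ≤ bnd := by
    intro t ht z hz
    have hγK : c + t • (z - c) ∈ K := hmemK t ht z hz
    have hn1 : ‖g (c + t • (z - c))‖ ≤ C₂ := hC₂ _ hγK
    have hzc : ‖z - c‖ ≤ ‖z₀ - c‖ + ε := by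
      calc ‖z - c‖ = ‖(z - z₀) + (z₀ - c)‖ := by rw [sub_add_sub_cancel]
        _ ≤ ‖z - z₀‖ + ‖z₀ - c‖ := norm_add_le _ _
        _ ≤ ε + ‖z₀ - c‖ := by
            have : ‖z - z₀‖ ≤ ε := by rwa [← dist_eq_norm, ← mem_closedBall]
            linarith
        _ = ‖z₀ - c‖ + ε := add_comm _ _
    have hn2 : ‖(t:ℂ) • (fderiv ℂ g (c + t • (z - c))).flip (z - c)‖
        ≤ C₁ * (‖z₀ - c‖ + ε) := by
      rw [norm_smul]
      have e1 : ‖(t:ℂ)‖ ≤ 1 := by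
        rw [Complex.norm_real, Real.norm_eq_abs]
        exact abs_le.2 ⟨by linarith [ht.1], ht.2⟩
      have e2 : ‖(fderiv ℂ g (c + t • (z - c))).flip (z - c)‖ ≤ C₁ * (‖z₀ - c‖ + ε) := by
        calc ‖(fderiv ℂ g (c + t • (z - c))).flip (z - c)‖
            ≤ ‖(fderiv ℂ g (c + t • (z - c))).flip‖ * ‖z - c‖ := le_opNorm _ _
          _ = ‖fderiv ℂ g (c + t • (z - c))‖ * ‖z - c‖ := by rw [opNorm_flip]
          _ ≤ C₁ * (‖z₀ - c‖ + ε) :=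
              mul_le_mul (hC₁ _ hγK) hzc (norm_nonneg _) hC₁0
      calc ‖(t:ℂ)‖ * ‖(fderiv ℂ g (c + t • (z - c))).flip (z - c)‖
          ≤ 1 * (C₁ * (‖z₀ - c‖ + ε)) :=
            mul_le_mul e1 e2 (norm_nonneg _) zero_le_one
        _ = C₁ * (‖z₀ - c‖ + ε) := one_mul _
    calc ‖F' z t‖ ≤ ‖g (c + t • (z - c))‖
        + ‖(t:ℂ) • (fderiv ℂ g (c + t • (z - c))).flip (z - c)‖ := norm_add_le _ _
      _ ≤ bnd := add_le_add hn1 hn2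
  -- continuity of the integrand in `t`
  have hcont : ∀ z ∈ closedBall z₀ ε,
      ContinuousOn (fun t : ℝ => g (c + t • (z - c)) (z - c)) (Icc 0 1) := by
    intro z hz
    have h1 : ContinuousOn (fun t : ℝ => g (c + t • (z - c))) (Icc 0 1) := by
      apply hg.continuousOn.comp (by fun_prop)
      intro t ht
      exact hKM (hmemK t ht z hz)
    exact (ContinuousLinearMap.apply ℂ ℂ (z - c)).continuous.comp_continuousOn h1
  -- measurability of `F' z₀`
  have hmeas' : AEStronglyMeasurable (F' z₀) (volume.restrict (Set.uIoc (0:ℝ) 1)) := by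
    have m1 : ContinuousOn (fun t : ℝ => g (c + t • (z₀ - c))) (Icc 0 1) := by
      apply hg.continuousOn.comp (by fun_prop)
      intro t ht
      exact hKM (hmemK t ht z₀ (mem_closedBall_self hε0.le))
    have m2 : AEStronglyMeasurable (fun t : ℝ => g (c + t • (z₀ - c)))
        (volume.restrict (Set.uIoc (0:ℝ) 1)) :=
      (m1.mono hIoc).aestronglyMeasurable measurableSet_uIoc
    have m3 : Measurable (fun t : ℝ => fderiv ℂ g (c + t • (z₀ - c))) :=
      (measurable_fderiv ℂ g).comp
        ((by fun_prop : Continuous fun t : ℝ => c + t • (z₀ - c)).measurable)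
    have mflip : Continuous (fun A : (Fin n → ℂ) →L[ℂ] ((Fin n → ℂ) →L[ℂ] ℂ) =>
        A.flip (z₀ - c)) :=
      (ContinuousLinearMap.apply ℂ ((Fin n → ℂ) →L[ℂ] ℂ) (z₀ - c)).continuous.comp
        (ContinuousLinearMap.flipₗᵢ ℂ (Fin n → ℂ) (Fin n → ℂ) ℂ).continuous
    have m4 : Measurable (fun t : ℝ => (fderiv ℂ g (c + t • (z₀ - c))).flip (z₀ - c)) :=
      mflip.measurable.comp m3
    have m5 : Measurable (fun t : ℝ =>
        (t:ℂ) • (fderiv ℂ g (c + t • (z₀ - c))).flip (z₀ - c)) := by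
      have hs : Continuous (fun p : ℂ × ((Fin n → ℂ) →L[ℂ] ℂ) => p.1 • p.2) :=
        continuous_smul
      exact hs.measurable.comp (Complex.measurable_ofReal.prodMk m4)
    exact m2.add m5.aestronglyMeasurable.restrict
  -- differentiation under the integral sign
  have key := intervalIntegral.hasFDerivAt_integral_of_dominated_of_fderiv_le
    (F := fun z t => g (c + t • (z - c)) (z - c)) (F' := F') (x₀ := z₀)
    (a := 0) (b := 1) (μ := volume) (bound := fun _ => bnd) (ball_mem_nhds z₀ hε0)
    (by filter_upwards [closedBall_mem_nhds z₀ hε0] with z hz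
        exact ((hcont z hz).mono hIoc).aestronglyMeasurable measurableSet_uIoc)
    (by apply ContinuousOn.intervalIntegrable
        rw [Set.uIcc_of_le zero_le_one]
        exact hcont z₀ (mem_closedBall_self hε0.le))
    hmeas'
    (by apply ae_of_all
        intro t ht z hz
        exact hboundF' t (hIoc ht) z (ball_subset_closedBall hz))
    intervalIntegrable_const
    (by apply ae_of_all
        intro t ht z hz
        exact hdiff t (hIoc ht) z (ball_subset_closedBall hz))
  -- compute the integral of `F' z₀` via the fundamental theorem of calculus
  have hΦ : ∀ t ∈ Set.uIcc (0:ℝ) 1,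
      HasDerivAt (fun t : ℝ => (t : ℂ) • g (c + t • (z₀ - c))) (F' z₀ t) t := by
    rw [Set.uIcc_of_le zero_le_one]
    intro t ht
    have hγM : c + t • (z₀ - c) ∈ M :=
      hKM (hmemK t ht z₀ (mem_closedBall_self hε0.le))
    have hγ : HasDerivAt (fun t : ℝ => c + t • (z₀ - c)) (z₀ - c) t := by
      have h0 : HasDerivAt (fun t : ℝ => t • (z₀ - c)) ((1:ℝ) • (z₀ - c)) t :=
        (hasDerivAt_id t).smul_const (z₀ - c)
      simpa using h0.const_add c
    have hgd : HasFDerivAt g (fderiv ℂ g (c + t • (z₀ - c))) (c + t • (z₀ - c)) :=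
      (hg.differentiableAt (hM.mem_nhds hγM)).hasFDerivAt
    have hgγ : HasDerivAt (fun t : ℝ => g (c + t • (z₀ - c)))
        (fderiv ℂ g (c + t • (z₀ - c)) (z₀ - c)) t := by
      have := (hgd.restrictScalars ℝ).comp_hasDerivAt t hγ
      simpa [Function.comp_def] using this
    have hcoe : HasDerivAt (fun t : ℝ => (t : ℂ)) 1 t := by
      exact Complex.ofRealCLM.hasDerivAt (x := t)
    have hmul := hcoe.smul hgγ
    have e : (t:ℂ) • (fderiv ℂ g (c + t • (z₀ - c)) (z₀ - c))
        + (1:ℂ) • g (c + t • (z₀ - c)) = F' z₀ t := by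
      ext v
      simp only [F', ContinuousLinearMap.add_apply, ContinuousLinearMap.smul_apply,
        one_smul, ContinuousLinearMap.flip_apply, smul_eq_mul]
      rw [hsym _ hγM (z₀ - c) v]
      ring
    rw [e] at hmul
    exact hmul
  have hint : IntervalIntegrable (F' z₀) volume 0 1 := by
    rw [intervalIntegrable_iff]
    haveI : IsFiniteMeasure (volume.restrict (Set.uIoc (0:ℝ) 1)) := by
      constructor
      rw [Measure.restrict_apply_univ, Set.uIoc_of_le zero_le_one]
      exact measure_Ioc_lt_top
    apply MeasureTheory.Integrable.mono' (integrable_const bnd) hmeas'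
    apply (ae_restrict_iff' measurableSet_uIoc).2
    apply ae_of_all
    intro t ht
    exact hboundF' t (hIoc ht) z₀ (mem_closedBall_self hε0.le)
  have hFTC := intervalIntegral.integral_eq_sub_of_hasDerivAt hΦ hint
  have hval : (∫ t in (0:ℝ)..1, F' z₀ t) = g z₀ := by
    rw [hFTC]
    have e1 : c + (1:ℝ) • (z₀ - c) = z₀ := by module
    norm_num [e1]
    exact zero_smul ℂ (g c)
  rw [hval] at key
  exact key

lemma pd_congr {n : ℕ} {M : Set (Fin n → ℂ)} (hM : IsOpen M) {f g : (Fin n → ℂ) → ℂ}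
    (h : ∀ x ∈ M, f x = g x) (i : Fin n) {z : Fin n → ℂ} (hz : z ∈ M) :
    pd i f z = pd i g z := by
  unfold pd
  rw [Filter.EventuallyEq.fderiv_eq (Filter.eventually_of_mem (hM.mem_nhds hz) h)]

lemma clm_eval_expand {n : ℕ} (T : (Fin n → ℂ) →L[ℂ] ℂ) (v : Fin n → ℂ) :
    T v = ∑ j, v j * T (Pi.single j 1) := by
  have hv : v = ∑ j, v j • (Pi.single j (1:ℂ) : Fin n → ℂ) := by
    funext k
    simp [Finset.sum_apply, Pi.single_apply]
  conv_lhs => rw [hv]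
  rw [map_sum]
  simp [smul_eq_mul]

lemma exists_primitive_pd {n : ℕ} {M : Set (Fin n → ℂ)} (hM : IsOpen M) (hconv : Convex ℝ M)
    (G : Fin n → (Fin n → ℂ) → ℂ) (hGdiff : ∀ i, DifferentiableOn ℂ (G i) M)
    (hGsym : ∀ i j, ∀ z ∈ M, pd i (G j) z = pd j (G i) z) :
    ∃ f : (Fin n → ℂ) → ℂ, DifferentiableOn ℂ f M ∧ ∀ i, ∀ z ∈ M, pd i f z = G i z := by
  rcases M.eq_empty_or_nonempty with rfl | ⟨c, hc⟩
  · exact ⟨0, differentiableOn_const 0, fun i z hz => absurd hz (Set.notMem_empty z)⟩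
  set g : (Fin n → ℂ) → ((Fin n → ℂ) →L[ℂ] ℂ) :=
    fun z => ∑ i, G i z • (ContinuousLinearMap.proj i : (Fin n → ℂ) →L[ℂ] ℂ) with hgdef
  have hkey : ∀ z ∈ M, HasFDerivAt g
      (∑ i, (fderiv ℂ (G i) z).smulRight (ContinuousLinearMap.proj i)) z := by
    intro z hz
    apply HasFDerivAt.fun_sum
    intro i _
    exact (((hGdiff i).differentiableAt (hM.mem_nhds hz)).hasFDerivAt).smul_const (ContinuousLinearMap.proj i : (Fin n → ℂ) →L[ℂ] ℂ)
  have hg : DifferentiableOn ℂ g M := fun z hz =>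
    ((hkey z hz).differentiableAt).differentiableWithinAt
  have hgval : ∀ z (v : Fin n → ℂ), g z v = ∑ i, G i z * v i := by
    intro z v
    simp [hgdef, smul_eq_mul]
  have hsym : ∀ x ∈ M, ∀ v w, fderiv ℂ g x v w = fderiv ℂ g x w v := by
    intro x hx v w
    rw [(hkey x hx).fderiv]
    simp only [ContinuousLinearMap.sum_apply, ContinuousLinearMap.smulRight_apply,
      ContinuousLinearMap.proj_apply, smul_eq_mul]
    have hexp : ∀ (i : Fin n) (u : Fin n → ℂ),
        fderiv ℂ (G i) x u = ∑ j, u j * pd j (G i) x :=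
      fun i u => clm_eval_expand _ u
    calc ∑ i, fderiv ℂ (G i) x v * w i
        = ∑ i, ∑ j, v j * pd j (G i) x * w i := by
          refine Finset.sum_congr rfl fun i _ => ?_
          rw [hexp i v, Finset.sum_mul]
      _ = ∑ j, ∑ i, v j * pd j (G i) x * w i := Finset.sum_comm
      _ = ∑ j, ∑ i, w i * pd i (G j) x * v j := by
          refine Finset.sum_congr rfl fun j _ => Finset.sum_congr rfl fun i _ => ?_
          rw [hGsym j i x hx]
          ring
      _ = ∑ j, fderiv ℂ (G j) x w * v j := by
          refine Finset.sum_congr rfl fun j _ => ?_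
          rw [hexp j w, Finset.sum_mul]
  obtain ⟨f, hf⟩ := exists_primitive hM hconv hc hg hsym
  refine ⟨f, fun z hz => (hf z hz).differentiableAt.differentiableWithinAt, fun i z hz => ?_⟩
  have e : pd i f z = g z (Pi.single i 1) := by
    unfold pd
    rw [(hf z hz).fderiv]
  rw [e, hgval]
  simp [Pi.single_apply]

/-- Let `M ⊆ ℂⁿ` be convex open and `A_{ijk}` holomorphic functions on `M`,
symmetric in `(i,j,k)`, such that `∂_i A_{jkl}` is symmetric in all four indices.
Then there is a holomorphic `F` on `M` with `∂_i ∂_j ∂_k F = A_{ijk}`. -/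
theorem exists_potential_of_symmetric {n : ℕ} (M : Set (Fin n → ℂ))
    (hopen : IsOpen M) (hconv : Convex ℝ M)
    (A : Fin n → Fin n → Fin n → (Fin n → ℂ) → ℂ)
    (hdiff : ∀ i j k, DifferentiableOn ℂ (A i j k) M)
    (hsym1 : ∀ i j k, A i j k = A j i k)
    (hsym2 : ∀ i j k, A i j k = A i k j)
    (hdsym : ∀ i j k l, ∀ z ∈ M, pd i (A j k l) z = pd j (A i k l) z) :
    ∃ F : (Fin n → ℂ) → ℂ, DifferentiableOn ℂ F M ∧
      ∀ i j k, ∀ z ∈ M, pd i (pd j (pd k F)) z = A i j k z := by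
  have h1 : ∀ j k, ∃ B, DifferentiableOn ℂ B M ∧ ∀ i, ∀ z ∈ M, pd i B z = A i j k z :=
    fun j k => exists_primitive_pd hopen hconv (fun i => A i j k) (fun i => hdiff i j k)
      (fun i i' z hz => hdsym i i' j k z hz)
  choose B hBdiff hB using h1
  set B' : Fin n → Fin n → (Fin n → ℂ) → ℂ := fun j k z => (2:ℂ)⁻¹ • (B j k z + B k j z) with hB'def
  have hB'diff : ∀ j k, DifferentiableOn ℂ (B' j k) M := by
    intro j k
    have h : DifferentiableOn ℂ (fun z => (2:ℂ)⁻¹ • (B j k z + B k j z)) M :=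
      ((hBdiff j k).add (hBdiff k j)).const_smul ((2:ℂ)⁻¹)
    exact h
  have hB'sym : ∀ j k, B' j k = B' k j := by
    intro j k
    funext z
    simp only [hB'def, smul_eq_mul]
    ring
  have hB' : ∀ j k i, ∀ z ∈ M, pd i (B' j k) z = A i j k z := by
    intro j k i z hz
    have d1 : DifferentiableAt ℂ (B j k) z := (hBdiff j k).differentiableAt (hopen.mem_nhds hz)
    have d2 : DifferentiableAt ℂ (B k j) z := (hBdiff k j).differentiableAt (hopen.mem_nhds hz)
    have e : pd i (B' j k) z = (2:ℂ)⁻¹ * (pd i (B j k) z + pd i (B k j) z) := by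
      unfold pd
      have e0 : B' j k = fun w => (2:ℂ)⁻¹ • (B j k w + B k j w) := rfl
      rw [e0, fderiv_fun_const_smul (f := fun w => B j k w + B k j w) (d1.add d2) ((2:ℂ)⁻¹), fderiv_fun_add d1 d2]
      simp only [ContinuousLinearMap.smul_apply, ContinuousLinearMap.add_apply, smul_eq_mul]
    rw [e, hB j k i z hz, hB k j i z hz, ← hsym2 i j k]
    ring
  have h2 : ∀ k, ∃ C, DifferentiableOn ℂ C M ∧ ∀ j, ∀ z ∈ M, pd j C z = B' j k z := by
    intro k
    apply exists_primitive_pd hopen hconv (fun j => B' j k) (fun j => hB'diff j k)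
    intro j j' z hz
    rw [hB' j' k j z hz, hB' j k j' z hz, hsym1 j j' k]
  choose C hCdiff hC using h2
  obtain ⟨F, hFdiff, hF⟩ := exists_primitive_pd hopen hconv (fun k => C k)
    (fun k => hCdiff k) (by
      intro k k' z hz
      rw [hC k' k z hz, hC k k' z hz, hB'sym k k'])
  refine ⟨F, hFdiff, fun i j k z hz => ?_⟩
  have e2 : ∀ x ∈ M, pd j (pd k F) x = B' j k x := fun x hx => by
    rw [pd_congr hopen (hF k) j hx, hC k j x hx]
  calc pd i (pd j (pd k F)) z = pd i (B' j k) z := pd_congr hopen e2 i hz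
    _ = A i j k z := hB' j k i z hz
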